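/- Let L be a complete lattice and a ∈ L. If there exists a strongly irreducible element of L above a, then the set of strongly irreducible elements of L lying above a has a minimal element; that is, there exists a strongly irreducible p ∈ L with a ≤ p such that any strongly irreducible q ∈ L with a ≤ q ≤ p equals p. -/
import Mathlib

/-- An element `p` of a lattice is *strongly irreducible* if
`a ⊓ b ≤ p` implies `a ≤ p` or `b ≤ p` for all `a b`. -/
def StronglyIrreducible {α : Type*} [SemilatticeInf α] (p : α) : Prop :=
  ∀ a b : α, a ⊓ b ≤ p → a ≤ p ∨ b ≤ p

/-- If an element `a` of a complete lattice is bounded above by a strongly irreducible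
element, then there is a minimal strongly irreducible element above `a`. -/
theorem exists_minimal_stronglyIrreducible_above
    {α : Type*} [CompleteLattice α] (a : α)
    (h : ∃ q : α, StronglyIrreducible q ∧ a ≤ q) :
    ∃ p : α, StronglyIrreducible p ∧ a ≤ p ∧
      ∀ q : α, StronglyIrreducible q → a ≤ q → q ≤ p → q = p := by
  obtain ⟨q, hq, haq⟩ := h
  have key : ∀ c ⊆ {p : α | StronglyIrreducible p ∧ a ≤ p}, IsChain (· ≤ ·) c →
      c.Nonempty → StronglyIrreducible (sInf c) ∧ a ≤ sInf c := by
    intro c hcs hc hne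
    refine ⟨?_, le_sInf fun z hz => (hcs hz).2⟩
    intro x w hxw
    by_contra hcon
    push_neg at hcon
    obtain ⟨hx, hw⟩ := hcon
    rw [le_sInf_iff] at hx hw
    push_neg at hx hw
    obtain ⟨b, hbc, hxb⟩ := hx
    obtain ⟨d, hdc, hwd⟩ := hw
    rcases hc.total hbc hdc with hbd | hdb
    · rcases (hcs hbc).1 x w (le_trans hxw (sInf_le hbc)) with h1 | h2
      · exact hxb h1
      · exact hwd (le_trans h2 hbd)
    · rcases (hcs hdc).1 x w (le_trans hxw (sInf_le hdc)) with h1 | h2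
      · exact hxb (le_trans h1 hdb)
      · exact hwd h2
  obtain ⟨m, hqm, hm⟩ := zorn_le_nonempty₀ (α := αᵒᵈ)
    {p : α | StronglyIrreducible p ∧ a ≤ p}
    (fun c hcs hc y hy => by
      have hne : c.Nonempty := ⟨y, hy⟩
      have hc' : IsChain (α := α) (· ≤ ·) c := by
        intro x hx z hz hxz
        rcases hc hx hz hxz with h | h
        · exact Or.inr h
        · exact Or.inl h
      refine ⟨sInf (α := α) c, key c hcs hc' hne, fun z hz => ?_⟩
      show sInf (α := α) c ≤ z
      exact sInf_le hz) q ⟨hq, haq⟩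
  refine ⟨m, hm.1.1, hm.1.2, fun r hr har hrm => ?_⟩
  exact le_antisymm hrm (hm.2 ⟨hr, har⟩ hrm)
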